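/- For every positive integer a, ∫₀¹ ((ax))((x))⁷ dx = (-48 + 80a² - 42a⁴ + 15a⁶)/(11520a⁷). -/

import Mathlib

open Real MeasureTheory

/-- The sawtooth (first Bernoulli) function `((x))`. -/
noncomputable def saw (x : ℝ) : ℝ := if Int.fract x = 0 then 0 else Int.fract x - 1/2

private lemma key_sum (c : ℝ) (n : ℕ) :
    ∑ k ∈ Finset.range n,
      ((((k:ℝ)+1-c/2)^9 - ((k:ℝ)-c/2)^9)/9
        + (c/2-(k:ℝ)-1/2)*((((k:ℝ)+1-c/2)^8 - ((k:ℝ)-c/2)^8))/8)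
      = -(n:ℝ)/240 + (n:ℝ)^3/36 - 7*(n:ℝ)^5/120 + (n:ℝ)^7/12
        + c*(-(n:ℝ)^2/24 + 7*(n:ℝ)^4/48 - 7*(n:ℝ)^6/24)
        + c^2*((n:ℝ)/48 - 7*(n:ℝ)^3/48 + 7*(n:ℝ)^5/16)
        + c^3*(7*(n:ℝ)^2/96 - 35*(n:ℝ)^4/96)
        + c^4*(-7*(n:ℝ)/384 + 35*(n:ℝ)^3/192)
        + c^5*(-7*(n:ℝ)^2/128)
        + c^6*(7*(n:ℝ)/768) := by
  induction n with
  | zero => simp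
  | succ n ih =>
    rw [Finset.sum_range_succ, ih]
    push_cast
    ring

private lemma saw_eq_on (a k : ℕ) (hk : k < a) {x : ℝ}
    (hx : x ∈ Set.Ioo ((k:ℝ)/a) (((k:ℝ)+1)/a)) :
    saw ((a:ℕ) * x) * saw x ^ 7 = ((a:ℝ)*x - k - 1/2) * (x - 1/2)^7 := by
  have ha : (0:ℝ) < a := by exact_mod_cast Nat.lt_of_le_of_lt (Nat.zero_le k) hk
  obtain ⟨h1, h2⟩ := hx
  have hk1 : ((k:ℝ)+1) ≤ a := by exact_mod_cast hk
  have hax1 : (k:ℝ) < a * x := by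
    have := (div_lt_iff₀ ha).mp h1; linarith [this]
  have hax2 : (a:ℝ) * x < k + 1 := by
    have := (lt_div_iff₀ ha).mp h2; linarith [this]
  have hx0 : 0 < x := lt_of_le_of_lt (by positivity) h1
  have hx1 : x < 1 := lt_of_lt_of_le h2 (by rw [div_le_one ha]; exact hk1)
  have hfl : ⌊(a:ℝ) * x⌋ = (k:ℤ) := by
    rw [Int.floor_eq_iff]
    constructor
    · exact_mod_cast hax1.le
    · push_cast; exact hax2
  have hfr : Int.fract ((a:ℝ) * x) = (a:ℝ)*x - k := by
    rw [Int.fract, hfl]; push_cast; ring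
  have hfrx : Int.fract x = x := Int.fract_eq_self.mpr ⟨hx0.le, hx1⟩
  rw [saw, saw, hfr, hfrx, if_neg (by intro h; linarith), if_neg (by intro h; linarith)]

private lemma poly_int (a k : ℕ) (hk : k < a) (ha : 0 < a) :
    ∫ x in ((k:ℝ)/a)..(((k:ℝ)+1)/a), ((a:ℝ)*x - k - 1/2) * (x - 1/2)^7
      = ((((k:ℝ)+1-(a:ℝ)/2)^9 - ((k:ℝ)-(a:ℝ)/2)^9)/9
        + ((a:ℝ)/2-(k:ℝ)-1/2)*((((k:ℝ)+1-(a:ℝ)/2)^8 - ((k:ℝ)-(a:ℝ)/2)^8))/8) / (a:ℝ)^8 := by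
  have ha' : (0:ℝ) < a := by exact_mod_cast ha
  have hderiv : ∀ x : ℝ, HasDerivAt
      (fun x : ℝ => (a:ℝ)/9*(x-1/2)^9 + ((a:ℝ)/2-(k:ℝ)-1/2)/8*(x-1/2)^8)
      (((a:ℝ)*x - k - 1/2) * (x - 1/2)^7) x := by
    intro x
    have h1 : HasDerivAt (fun x : ℝ => x - 1/2) 1 x := (hasDerivAt_id x).sub_const _
    have h9 := h1.pow 9
    have h8 := h1.pow 8
    have := (h9.const_mul ((a:ℝ)/9)).add (h8.const_mul (((a:ℝ)/2-(k:ℝ)-1/2)/8))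
    refine this.congr_deriv ?_
    push_cast
    ring
  rw [intervalIntegral.integral_eq_sub_of_hasDerivAt (fun x _ => hderiv x)
    ((by fun_prop : Continuous fun x : ℝ => ((a:ℝ)*x - k - 1/2) * (x - 1/2)^7).intervalIntegrable _ _)]
  field_simp
  ring

theorem franel_a1x7 (a : ℕ) (ha : 0 < a) :
    ∫ x in (0:ℝ)..1, saw (a * x) * (saw x)^7 =
      (-48 + 80 * (a:ℝ)^2 - 42 * (a:ℝ)^4 + 15 * (a:ℝ)^6) / (11520 * (a:ℝ)^7) := by
  have ha' : (0:ℝ) < a := by exact_mod_cast ha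
  set f : ℝ → ℝ := fun x => saw (a * x) * (saw x)^7 with hf
  have hle : ∀ k : ℕ, (k:ℝ)/a ≤ ((k:ℝ)+1)/a := fun k =>
    (div_le_div_iff_of_pos_right ha').mpr (by linarith)
  -- integrability and congruence on each subinterval
  have hcongr : ∀ k : ℕ, k < a →
      (∫ x in ((k:ℝ)/a)..(((k:ℝ)+1)/a), f x)
        = ∫ x in ((k:ℝ)/a)..(((k:ℝ)+1)/a), ((a:ℝ)*x - k - 1/2) * (x - 1/2)^7 := by
    intro k hk
    apply intervalIntegral.integral_congr_ae
    have hnull : (volume : Measure ℝ) {(((k:ℝ)+1)/a)} = 0 := measure_singleton _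
    rw [Set.uIoc_of_le (hle k)]
    filter_upwards [compl_mem_ae_iff.mpr hnull] with x hx hx2
    have : x ∈ Set.Ioo ((k:ℝ)/a) (((k:ℝ)+1)/a) := by
      rcases lt_or_eq_of_le hx2.2 with h | h
      · exact ⟨hx2.1, h⟩
      · exact absurd h hx
    exact saw_eq_on a k hk this
  have hint : ∀ k : ℕ, k < a → IntervalIntegrable f volume ((k:ℝ)/a) (((k:ℝ)+1)/a) := by
    intro k hk
    rw [intervalIntegrable_iff, Set.uIoc_of_le (hle k)]
    apply IntegrableOn.congr_set_ae (t := Set.Ioo ((k:ℝ)/a) (((k:ℝ)+1)/a)) _ Ioo_ae_eq_Ioc.symm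
    have hp : IntegrableOn (fun x : ℝ => ((a:ℝ)*x - k - 1/2) * (x - 1/2)^7)
        (Set.Ioo ((k:ℝ)/a) (((k:ℝ)+1)/a)) volume :=
      (((by fun_prop : Continuous fun x : ℝ => ((a:ℝ)*x - k - 1/2) * (x - 1/2)^7)).integrableOn_Icc).mono_set Set.Ioo_subset_Icc_self
    exact hp.congr_fun (fun x hx => (saw_eq_on a k hk hx).symm) measurableSet_Ioo
  -- split the integral
  have hsplit := intervalIntegral.sum_integral_adjacent_intervals
    (f := f) (μ := volume) (a := fun k : ℕ => (k:ℝ)/a) (n := a) ?_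
  · have h0 : ((0:ℕ):ℝ)/a = 0 := by simp
    have h1 : ((a:ℕ):ℝ)/a = 1 := by field_simp
    rw [h0, h1] at hsplit
    rw [hf] at hsplit ⊢
    rw [← hsplit]
    have : ∀ k ∈ Finset.range a,
        (∫ x in (((k:ℕ):ℝ)/a)..((((k:ℕ)+1:ℕ):ℝ)/a), f x)
          = ((((k:ℝ)+1-(a:ℝ)/2)^9 - ((k:ℝ)-(a:ℝ)/2)^9)/9
            + ((a:ℝ)/2-(k:ℝ)-1/2)*((((k:ℝ)+1-(a:ℝ)/2)^8 - ((k:ℝ)-(a:ℝ)/2)^8))/8) / (a:ℝ)^8 := by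
      intro k hk
      have hk' : k < a := Finset.mem_range.mp hk
      have hc : (((k:ℕ)+1:ℕ):ℝ) = (k:ℝ)+1 := by push_cast; ring
      rw [hc, hcongr k hk', poly_int a k hk' ha]
    rw [Finset.sum_congr rfl this, ← Finset.sum_div, key_sum ((a:ℝ)) a]
    field_simp
    ring
  · intro k hk
    have hc : (((k:ℕ)+1:ℕ):ℝ) = (k:ℝ)+1 := by push_cast; ring
    show IntervalIntegrable f volume ((k:ℝ)/a) ((((k:ℕ)+1:ℕ):ℝ)/a)
    rw [hc]
    exact hint k hk
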